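/- arXiv:1210.8206 — 3 statements merged into one kernel-verified Lean document; each statement's English description precedes it below -/
import Mathlib

section
/- Let λ be a weakly decreasing sequence of n nonnegative integers and μ a weakly decreasing sequence of n-2 nonnegative integers doubly interlacing λ. Let (x₁, z₁, ..., x_{n-1}, z_{n-1}) be the weakly decreasing rearrangement of (λ₁,...,λ_n, μ₁,...,μ_{n-2}). Then the map sending an interlacing pattern μ ⊑ κ ⊑ λ to the tuple of GL₂ Gelfand-Tsetlin patterns with top rows (x_i, z_i) and middle entries κ_i is a bijection from the set of sequences κ with μ ⊑ κ ⊑ λ to the set of (n-1)-tuples (y₁,...,y_{n-1}) of integers with x_i ≥ y_i ≥ z_i for each i. -/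
/-- `a` is a weakly decreasing sequence of length `k` (entries `a 0, …, a (k-1)`). -/
def WeaklyDecr (k : ℕ) (a : ℕ → ℤ) : Prop :=
  ∀ i : ℕ, i + 1 < k → a (i + 1) ≤ a i

/-- The entries `a 0, …, a (k-1)` are nonnegative. -/
def NonnegSeq (k : ℕ) (a : ℕ → ℤ) : Prop :=
  ∀ i : ℕ, i < k → 0 ≤ a i

/-- `Interlaces k β α` : the length-`(k-1)` sequence `β` interlaces the length-`k`
sequence `α`, i.e. `α 0 ≥ β 0 ≥ α 1 ≥ β 1 ≥ ⋯ ≥ β (k-2) ≥ α (k-1)`. -/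
def Interlaces (k : ℕ) (β α : ℕ → ℤ) : Prop :=
  ∀ i : ℕ, i + 1 < k → β i ≤ α i ∧ α (i + 1) ≤ β i

/-- `μ` (length `n-2`) doubly interlaces `lam` (length `n`):
there is a weakly decreasing `κ` of length `n-1` with `μ ⊑ κ ⊑ lam`. -/
def DoublyInterlaces (n : ℕ) (μ lam : ℕ → ℤ) : Prop :=
  ∃ κ : ℕ → ℤ, WeaklyDecr (n - 1) κ ∧ Interlaces n κ lam ∧ Interlaces (n - 1) μ κ

/-- `s` is the weakly decreasing rearrangement
`(x₁, z₁, …, x_{n-1}, z_{n-1})` (with `x j = s (2*j)`, `z j = s (2*j+1)` in 0-based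
indexing) of the concatenation of `lam` (length `n`) and `μ` (length `n-2`). -/
def Rearr (n : ℕ) (lam μ s : ℕ → ℤ) : Prop :=
  WeaklyDecr (2 * n - 2) s ∧
    ((List.range (2 * n - 2)).map s).Perm
      (((List.range n).map lam) ++ ((List.range (n - 2)).map μ))

/-- Entry access for a length-`k` tuple, with default `0` out of range. -/
def fget {k : ℕ} (a : Fin k → ℤ) (i : ℕ) : ℤ := if h : i < k then a ⟨i, h⟩ else 0


/-- The explicit merged sequence. -/
def mrg (n : ℕ) (lam mu : ℕ → ℤ) (k : ℕ) : ℤ :=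
  if k % 2 = 0 then
    (if k = 0 then lam 0 else min (lam (k / 2)) (mu (k / 2 - 1)))
  else
    (if k / 2 = n - 2 then lam (n - 1) else max (lam (k / 2 + 1)) (mu (k / 2)))

lemma mrg_zero (n : ℕ) (lam mu : ℕ → ℤ) : mrg n lam mu 0 = lam 0 := by
  simp [mrg]

lemma mrg_even (n : ℕ) (lam mu : ℕ → ℤ) (j : ℕ) (hj : j ≠ 0) :
    mrg n lam mu (2 * j) = min (lam j) (mu (j - 1)) := by
  have h1 : (2 * j) % 2 = 0 := by omega
  have h2 : (2 * j) / 2 = j := by omega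
  have h3 : 2 * j ≠ 0 := by omega
  simp [mrg, h1, h2, h3]

lemma mrg_odd (n : ℕ) (lam mu : ℕ → ℤ) (j : ℕ) (hj : j ≠ n - 2) :
    mrg n lam mu (2 * j + 1) = max (lam (j + 1)) (mu j) := by
  have h1 : (2 * j + 1) % 2 = 1 := by omega
  have h2 : (2 * j + 1) / 2 = j := by omega
  simp [mrg, h1, h2, hj]

lemma mrg_odd_last (n : ℕ) (lam mu : ℕ → ℤ) :
    mrg n lam mu (2 * (n - 2) + 1) = lam (n - 1) := by
  have h1 : (2 * (n - 2) + 1) % 2 = 1 := by omega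
  have h2 : (2 * (n - 2) + 1) / 2 = n - 2 := by omega
  simp [mrg, h1, h2]

lemma mrg_perm_aux (N : ℕ) (lam mu : ℕ → ℤ) :
    ∀ K, K ≤ N →
      (((List.range (2 * K + 1)).map (mrg (N + 2) lam mu) : List ℤ) : Multiset ℤ)
        = (((List.range (K + 1)).map lam : List ℤ) : Multiset ℤ)
          + (((List.range K).map mu : List ℤ) : Multiset ℤ) := by
  intro K
  induction K with
  | zero =>
    intro _
    simp [List.range_succ, mrg_zero]
  | succ K ih =>
    intro hK
    have hK' : K ≤ N := by omega
    have hKne : K ≠ (N + 2) - 2 := by omega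
    have hK1ne : K + 1 ≠ 0 := by omega
    have hv1 : mrg (N + 2) lam mu (2 * K + 1) = max (lam (K + 1)) (mu K) :=
      mrg_odd _ _ _ _ hKne
    have hv2 : mrg (N + 2) lam mu (2 * K + 1 + 1) = min (lam (K + 1)) (mu K) := by
      have e : 2 * K + 1 + 1 = 2 * (K + 1) := by ring
      rw [e]; exact mrg_even _ _ _ _ hK1ne
    have e1 : 2 * (K + 1) + 1 = (2 * K + 1) + 1 + 1 := by ring
    have hL : (List.range (2 * (K + 1) + 1)).map (mrg (N + 2) lam mu)
        = (List.range (2 * K + 1)).map (mrg (N + 2) lam mu)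
          ++ [mrg (N + 2) lam mu (2 * K + 1), mrg (N + 2) lam mu (2 * K + 1 + 1)] := by
      rw [e1, List.range_succ, List.range_succ (n := 2 * K + 1)]
      simp
    have hR1 : (List.range (K + 1 + 1)).map lam
        = (List.range (K + 1)).map lam ++ [lam (K + 1)] := by
      rw [List.range_succ (n := K + 1)]; simp
    have hR2 : (List.range (K + 1)).map mu
        = (List.range K).map mu ++ [mu K] := by
      rw [List.range_succ (n := K)]; simp
    rw [hL, hR1, hR2, hv1, hv2]
    simp only [← Multiset.coe_add, ← Multiset.cons_coe, ← Multiset.singleton_add,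
      Multiset.coe_singleton]
    rw [ih hK']
    rcases le_total (lam (K + 1)) (mu K) with h | h
    · rw [max_eq_right h, min_eq_left h]; abel
    · rw [max_eq_left h, min_eq_right h]; abel

lemma sorted_map_range_of_decr (m : ℕ) (f : ℕ → ℤ)
    (h : ∀ i, i + 1 < m → f (i + 1) ≤ f i) :
    ((List.range m).map f).Pairwise (· ≥ ·) := by
  have mono : ∀ j i, i ≤ j → j < m → f j ≤ f i := by
    intro j
    induction j with
    | zero =>
      intro i hij _
      obtain rfl : i = 0 := by omega
      exact le_rfl
    | succ j ih =>
      intro i hij hjm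
      rcases Nat.eq_or_lt_of_le hij with rfl | hlt
      · exact le_rfl
      · exact (h j hjm).trans (ih i (by omega) (by omega))
  rw [List.pairwise_map, List.pairwise_iff_getElem]
  intro i j hi hj hij
  simp only [List.length_range] at hi hj
  simp only [List.getElem_range]
  exact mono j i (le_of_lt hij) hj

/-- The map sending an interlacing pattern `μ ⊑ κ ⊑ lam` to the `(n-1)`-tuple of GL₂
Gelfand-Tsetlin patterns with top rows `(x_i, z_i)` and middle entries `κ_i`
(i.e. the identity on the tuple `κ`) is a bijection onto the set of tuples
`(y₁,…,y_{n-1})` with `x_i ≥ y_i ≥ z_i` for all `i`. -/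
theorem stmt_3 (n : ℕ) (hn : 2 ≤ n) (lam mu s : ℕ → ℤ)
    (hlam : WeaklyDecr n lam) (hlam0 : NonnegSeq n lam)
    (hmu : WeaklyDecr (n - 2) mu) (hmu0 : NonnegSeq (n - 2) mu)
    (hd : DoublyInterlaces n mu lam)
    (hs : Rearr n lam mu s) :
    Set.BijOn id
      {κ : Fin (n - 1) → ℤ |
        WeaklyDecr (n - 1) (fget κ) ∧ Interlaces n (fget κ) lam ∧
          Interlaces (n - 1) mu (fget κ)}
      {y : Fin (n - 1) → ℤ |
        ∀ j : ℕ, j < n - 1 → s (2 * j + 1) ≤ fget y j ∧ fget y j ≤ s (2 * j)} := by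
  obtain ⟨N, rfl⟩ : ∃ N, n = N + 2 := ⟨n - 2, by omega⟩
  obtain ⟨κ₀, hκ₀d, hκ₀l, hκ₀m⟩ := hd
  -- value lemmas for the explicit merged sequence
  have tzero : mrg (N + 2) lam mu 0 = lam 0 := mrg_zero _ _ _
  have teven : ∀ j : ℕ, j ≠ 0 → mrg (N + 2) lam mu (2 * j) = min (lam j) (mu (j - 1)) :=
    fun j hj => mrg_even _ _ _ _ hj
  have todd : ∀ j : ℕ, j ≠ N → mrg (N + 2) lam mu (2 * j + 1) = max (lam (j + 1)) (mu j) :=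
    fun j hj => mrg_odd _ _ _ _ (by omega)
  have tlast : mrg (N + 2) lam mu (2 * N + 1) = lam (N + 1) := by
    have h := mrg_odd_last (N + 2) lam mu
    have e1 : (N + 2) - 2 = N := by omega
    have e2 : (N + 2) - 1 = N + 1 := by omega
    rw [e1, e2] at h
    exact h
  -- the key bounds, for any interlacing sequence
  have keys : ∀ κ' : ℕ → ℤ, Interlaces (N + 2) κ' lam → Interlaces (N + 2 - 1) mu κ' →
      ∀ j : ℕ, j < N + 1 →
        mrg (N + 2) lam mu (2 * j + 1) ≤ κ' j ∧ κ' j ≤ mrg (N + 2) lam mu (2 * j) := by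
    intro κ' hl hm j hj
    constructor
    · by_cases hjN : j = N
      · rw [hjN, tlast]
        exact (hl N (by omega)).2
      · rw [todd j hjN]
        exact max_le (hl j (by omega)).2 (hm j (by omega)).1
    · by_cases hj0 : j = 0
      · subst hj0
        have e : 2 * 0 = 0 := by norm_num
        rw [e, tzero]
        exact (hl 0 (by omega)).1
      · rw [teven j hj0]
        refine le_min (hl j (by omega)).1 ?_
        have h := (hm (j - 1) (by omega)).2
        have e : j - 1 + 1 = j := by omega
        rw [e] at h
        exact h
  -- the explicit merged sequence is weakly decreasing
  have htdec : ∀ k : ℕ, k + 1 < 2 * N + 2 →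
      mrg (N + 2) lam mu (k + 1) ≤ mrg (N + 2) lam mu k := by
    intro k hk
    rcases Nat.even_or_odd k with ⟨j, hj⟩ | ⟨j, hj⟩
    · obtain rfl : k = 2 * j := by omega
      have hj1 : j < N + 1 := by omega
      exact le_trans (keys κ₀ hκ₀l hκ₀m j hj1).1 (keys κ₀ hκ₀l hκ₀m j hj1).2
    · obtain rfl : k = 2 * j + 1 := by omega
      have hjN : j < N := by omega
      have e : 2 * j + 1 + 1 = 2 * (j + 1) := by ring
      rw [e, teven (j + 1) (by omega), todd j (by omega)]
      exact (min_le_left _ _).trans (le_max_left _ _)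
  -- identify s with mrg on the relevant range
  have hws : ∀ i : ℕ, i + 1 < 2 * N + 2 → s (i + 1) ≤ s i := by
    intro i hi
    exact hs.1 i (by omega)
  have hperm_t : (((List.range (2 * N + 1 + 1)).map (mrg (N + 2) lam mu) : List ℤ) : Multiset ℤ)
      = (((List.range (N + 2)).map lam : List ℤ) : Multiset ℤ)
        + (((List.range N).map mu : List ℤ) : Multiset ℤ) := by
    have hA := mrg_perm_aux N lam mu N le_rfl
    rw [List.range_succ (n := 2 * N + 1)]
    have hR : List.range (N + 2) = List.range (N + 1) ++ [N + 1] := by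
      rw [← List.range_succ]
    rw [hR]
    simp only [List.map_append, List.map_cons, List.map_nil, tlast]
    simp only [← Multiset.coe_add, ← Multiset.cons_coe, ← Multiset.singleton_add,
      Multiset.coe_singleton]
    rw [hA]
    abel
  have hs2 := hs.2
  have e1 : 2 * (N + 2) - 2 = 2 * N + 1 + 1 := by omega
  have e2 : (N + 2) - 2 = N := by omega
  rw [e1, e2] at hs2
  have hpermst : ((List.range (2 * N + 1 + 1)).map s).Perm
      ((List.range (2 * N + 1 + 1)).map (mrg (N + 2) lam mu)) := by
    refine hs2.trans ?_
    refine (Multiset.coe_eq_coe.mp ?_).symm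
    rw [hperm_t]
    simp [← Multiset.coe_add]
  haveI : IsAntisymm ℤ (· ≥ ·) := ⟨fun a b h1 h2 => le_antisymm h2 h1⟩
  have hls : (List.range (2 * N + 1 + 1)).map s
      = (List.range (2 * N + 1 + 1)).map (mrg (N + 2) lam mu) :=
    List.Perm.eq_of_sortedGE
      (List.Pairwise.sortedGE (sorted_map_range_of_decr _ _ (by intro i hi; exact hws i (by omega))))
      (List.Pairwise.sortedGE (sorted_map_range_of_decr _ _ (by intro i hi; exact htdec i (by omega))))
      hpermst
  have hst : ∀ k : ℕ, k < 2 * N + 2 → s k = mrg (N + 2) lam mu k := by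
    intro k hk
    have hk' : k < ((List.range (2 * N + 1 + 1)).map s).length := by
      simp; omega
    have h := List.getElem_of_eq hls hk'
    simpa using h
  -- the two sets are equal
  have hseteq : {κ : Fin (N + 2 - 1) → ℤ |
        WeaklyDecr (N + 2 - 1) (fget κ) ∧ Interlaces (N + 2) (fget κ) lam ∧
          Interlaces (N + 2 - 1) mu (fget κ)}
      = {y : Fin (N + 2 - 1) → ℤ |
        ∀ j : ℕ, j < N + 2 - 1 → s (2 * j + 1) ≤ fget y j ∧ fget y j ≤ s (2 * j)} := by
    ext y
    simp only [Set.mem_setOf_eq]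
    constructor
    · rintro ⟨hwd, hl, hm⟩ j hj
      have hj' : j < N + 1 := by omega
      have hk := keys (fget y) hl hm j hj'
      rw [hst (2 * j + 1) (by omega), hst (2 * j) (by omega)]
      exact hk
    · intro hy
      have hy' : ∀ j : ℕ, j < N + 1 →
          mrg (N + 2) lam mu (2 * j + 1) ≤ fget y j ∧
            fget y j ≤ mrg (N + 2) lam mu (2 * j) := by
        intro j hj
        have h := hy j (by omega)
        rw [hst (2 * j + 1) (by omega), hst (2 * j) (by omega)] at h
        exact h
      refine ⟨?_, ?_, ?_⟩
      · intro i hi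
        have h1 := (hy' (i + 1) (by omega)).2
        have h2 := (hy' i (by omega)).1
        have h3 : mrg (N + 2) lam mu (2 * (i + 1)) ≤ mrg (N + 2) lam mu (2 * i + 1) := by
          rw [teven (i + 1) (by omega), todd i (by omega)]
          exact (min_le_left _ _).trans (le_max_left _ _)
        exact h1.trans (h3.trans h2)
      · intro i hi
        have hiN : i < N + 1 := by omega
        constructor
        · have h := (hy' i hiN).2
          by_cases h0 : i = 0
          · subst h0
            have e : (2 : ℕ) * 0 = 0 := by norm_num
            rw [e, tzero] at h
            exact h
          · rw [teven i h0] at h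
            exact h.trans (min_le_left _ _)
        · have h := (hy' i hiN).1
          by_cases hN : i = N
          · rw [hN, tlast] at h
            rw [hN]
            exact h
          · rw [todd i hN] at h
            exact (le_max_left _ _).trans h
      · intro i hi
        constructor
        · have h := (hy' i (by omega)).1
          rw [todd i (by omega)] at h
          exact (le_max_right _ _).trans h
        · have h := (hy' (i + 1) (by omega)).2
          rw [teven (i + 1) (by omega)] at h
          have h2 := h.trans (min_le_right _ _)
          have e : i + 1 - 1 = i := by omega
          rw [e] at h2
          exact h2
  rw [hseteq]
  exact Set.bijOn_id _
end

section
/- Let λ be a weakly decreasing sequence of n nonnegative integers and μ a weakly decreasing sequence of n-2 nonnegative integers doubly interlacing λ. Let (x₁, z₁, ..., x_{n-1}, z_{n-1}) be the weakly decreasing rearrangement of (λ₁,...,λ_n, μ₁,...,μ_{n-2}). Then the number of weakly decreasing sequences κ of length n-1 with μ ⊑ κ ⊑ λ equals ∏_{j=1}^{n-1} (x_j - z_j + 1). -/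
/-! ### auxiliary definitions -/

/-- Upper bound for `κ j`. -/
def Ub (lam mu : ℕ → ℤ) (j : ℕ) : ℤ := if j = 0 then lam 0 else min (lam j) (mu (j - 1))

/-- Lower bound for `κ j` (here `k = n - 2`). -/
def Lb (k : ℕ) (lam mu : ℕ → ℤ) (j : ℕ) : ℤ :=
  if j < k then max (lam (j + 1)) (mu j) else lam (j + 1)

/-- The candidate sorted merge. -/
def Tt (k : ℕ) (lam mu : ℕ → ℤ) (i : ℕ) : ℤ :=
  if i % 2 = 0 then Ub lam mu (i / 2) else Lb k lam mu (i / 2)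

lemma Ub_le_lam (lam mu : ℕ → ℤ) (j : ℕ) : Ub lam mu j ≤ lam j := by
  unfold Ub; split
  · subst ‹j = 0›; exact le_refl _
  · exact min_le_left _ _

lemma Ub_le_mu (lam mu : ℕ → ℤ) (j : ℕ) (hj : j ≠ 0) : Ub lam mu j ≤ mu (j - 1) := by
  unfold Ub; rw [if_neg hj]; exact min_le_right _ _

lemma lam_le_Lb (k : ℕ) (lam mu : ℕ → ℤ) (j : ℕ) : lam (j + 1) ≤ Lb k lam mu j := by
  unfold Lb; split
  · exact le_max_left _ _
  · exact le_refl _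

lemma mu_le_Lb (k : ℕ) (lam mu : ℕ → ℤ) (j : ℕ) (hj : j < k) : mu j ≤ Lb k lam mu j := by
  unfold Lb; rw [if_pos hj]; exact le_max_right _ _

/-- Characterization of interlacing sandwiches by independent interval conditions. -/
lemma char_iff (k : ℕ) (lam mu c : ℕ → ℤ) :
    (WeaklyDecr (k + 1) c ∧ Interlaces (k + 2) c lam ∧ Interlaces (k + 1) mu c) ↔
      ∀ j, j < k + 1 → Lb k lam mu j ≤ c j ∧ c j ≤ Ub lam mu j := by
  constructor
  · rintro ⟨-, h2, h3⟩ j hj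
    obtain ⟨hcl, hlc⟩ := h2 j (by omega)
    constructor
    · unfold Lb; split
      · exact max_le hlc (h3 j (by omega)).1
      · exact hlc
    · unfold Ub; split
      · subst ‹j = 0›; exact hcl
      · have hj0 : j ≠ 0 := ‹¬ j = 0›
        have := (h3 (j - 1) (by omega)).2
        rw [Nat.sub_add_cancel (by omega)] at this
        exact le_min hcl this
  · intro h
    refine ⟨?_, ?_, ?_⟩
    · intro i hi
      calc c (i + 1) ≤ Ub lam mu (i + 1) := (h (i + 1) (by omega)).2
        _ ≤ lam (i + 1) := Ub_le_lam _ _ _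
        _ ≤ Lb k lam mu i := lam_le_Lb _ _ _ _
        _ ≤ c i := (h i (by omega)).1
    · intro i hi
      exact ⟨le_trans (h i (by omega)).2 (Ub_le_lam _ _ _),
        le_trans (lam_le_Lb _ _ _ _) (h i (by omega)).1⟩
    · intro i hi
      refine ⟨le_trans (mu_le_Lb _ _ _ _ (by omega)) (h i (by omega)).1, ?_⟩
      have := le_trans (h (i + 1) (by omega)).2 (Ub_le_mu lam mu (i + 1) (by omega))
      simpa using this

lemma sum_range_two_mul {M : Type*} [AddCommMonoid M] (g : ℕ → M) :
    ∀ m : ℕ, ∑ i ∈ Finset.range (2 * m), g i = ∑ j ∈ Finset.range m, (g (2 * j) + g (2 * j + 1))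
  | 0 => by simp
  | m + 1 => by
    rw [show 2 * (m + 1) = (2 * m + 1) + 1 by ring, Finset.sum_range_succ, Finset.sum_range_succ,
      Finset.sum_range_succ, sum_range_two_mul g m, add_assoc]

lemma msum (f : ℕ → ℤ) : ∀ k : ℕ,
    Multiset.map f (Multiset.range k) = ∑ i ∈ Finset.range k, ({f i} : Multiset ℤ)
  | 0 => by simp
  | k + 1 => by
    rw [Multiset.range_succ, Multiset.map_cons, Finset.sum_range_succ, msum f k, add_comm,
      Multiset.singleton_add]

lemma sorted_map_range (k : ℕ) (f : ℕ → ℤ) (h : ∀ i, i + 1 < k → f (i + 1) ≤ f i) :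
    List.Pairwise (· ≥ ·) ((List.range k).map f) := by
  rw [← List.isChain_iff_pairwise, List.isChain_map]
  cases k with
  | zero => simp
  | succ k =>
    rw [List.isChain_range_succ]
    intro m hm
    exact h m (by omega)

/-- The number of weakly decreasing sequences `κ` of length `n-1` with
`μ ⊑ κ ⊑ lam` equals `∏_{j=1}^{n-1} (x_j - z_j + 1)`, where
`(x₁,z₁,…,x_{n-1},z_{n-1})` is the weakly decreasing rearrangement of the
concatenation of `lam` and `μ`. -/
theorem stmt_4 (n : ℕ) (hn : 2 ≤ n) (lam mu s : ℕ → ℤ)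
    (hlam : WeaklyDecr n lam) (hlam0 : NonnegSeq n lam)
    (hmu : WeaklyDecr (n - 2) mu) (hmu0 : NonnegSeq (n - 2) mu)
    (hd : DoublyInterlaces n mu lam)
    (hs : Rearr n lam mu s) :
    (Nat.card {κ : Fin (n - 1) → ℤ //
        WeaklyDecr (n - 1) (fget κ) ∧ Interlaces n (fget κ) lam ∧
          Interlaces (n - 1) mu (fget κ)} : ℤ) =
      ∏ j ∈ Finset.range (n - 1), (s (2 * j) - s (2 * j + 1) + 1) := by
  obtain ⟨k, rfl⟩ : ∃ k, n = k + 2 := ⟨n - 2, by omega⟩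
  have h1 : k + 2 - 1 = k + 1 := by omega
  have h2' : k + 2 - 2 = k := by omega
  have h3' : 2 * (k + 2) - 2 = 2 * (k + 1) := by omega
  rw [h1] at *
  rw [h2'] at *
  set L := Lb k lam mu with hL
  set U := Ub lam mu with hU
  -- the intervals are nonempty
  have hLU : ∀ j, j < k + 1 → L j ≤ U j := by
    obtain ⟨κ, hκ⟩ := hd
    rw [show k + 2 - 1 = k + 1 by omega] at hκ
    intro j hj
    obtain ⟨a, b⟩ := (char_iff k lam mu κ).1 hκ j hj
    exact le_trans a b
  -- s agrees with the explicit sorted merge Tt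
  have hst : ∀ i, i < 2 * (k + 1) → s i = Tt k lam mu i := by
    obtain ⟨hs1, hs2⟩ := hs
    rw [h3'] at hs1 hs2
    rw [h2'] at hs2
    -- the Tt list is a permutation of lam ++ mu
    have hperm : ((List.range (2 * (k + 1))).map (Tt k lam mu)).Perm
        (((List.range (k + 2)).map lam) ++ ((List.range k).map mu)) := by
      rw [← Multiset.coe_eq_coe]
      have e1 : ∀ (f : ℕ → ℤ) (m : ℕ), (↑((List.range m).map f) : Multiset ℤ)
          = ∑ i ∈ Finset.range m, ({f i} : Multiset ℤ) := by
        intro f m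
        rw [← msum]; rfl
      rw [show (((List.map lam (List.range (k+2)) ++ List.map mu (List.range k) : List ℤ)) : Multiset ℤ)
          = (↑(List.map lam (List.range (k+2))) : Multiset ℤ) + ↑(List.map mu (List.range k)) from rfl,
        e1, e1, e1, sum_range_two_mul]
      have ht2 : ∀ j, Tt k lam mu (2 * j) = U j := by
        intro j; unfold Tt
        rw [if_pos (by omega), Nat.mul_div_cancel_left _ (by norm_num)]
      have ht2' : ∀ j, Tt k lam mu (2 * j + 1) = L j := by
        intro j; unfold Tt
        rw [if_neg (by omega), show (2 * j + 1) / 2 = j by omega]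
      simp only [ht2, ht2']
      -- peel first/last elements
      rw [Finset.sum_add_distrib, Finset.sum_range_succ' (fun j => ({U j} : Multiset ℤ)) k,
        Finset.sum_range_succ (fun j => ({L j} : Multiset ℤ)) k,
        Finset.sum_range_succ (fun i => ({lam i} : Multiset ℤ)) (k + 1),
        Finset.sum_range_succ' (fun i => ({lam i} : Multiset ℤ)) k]
      have hU0 : U 0 = lam 0 := by rw [hU]; unfold Ub; rw [if_pos rfl]
      have hLk : L k = lam (k + 1) := by rw [hL]; unfold Lb; rw [if_neg (by omega)]
      have hmid : ∀ j ∈ Finset.range k,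
          ({U (j + 1)} : Multiset ℤ) + {L j} = ({lam (j + 1)} : Multiset ℤ) + {mu j} := by
        intro j hj
        rw [Finset.mem_range] at hj
        rw [hU, hL]
        unfold Ub Lb
        rw [if_neg (by omega), if_pos hj]
        simp only [Nat.add_sub_cancel]
        rcases le_total (lam (j + 1)) (mu j) with h | h
        · rw [min_eq_left h, max_eq_right h]
        · rw [min_eq_right h, max_eq_left h, add_comm]
      have hsplit : (∑ j ∈ Finset.range k, ({U (j + 1)} : Multiset ℤ)) +
          ∑ j ∈ Finset.range k, ({L j} : Multiset ℤ)
          = (∑ j ∈ Finset.range k, ({lam (j + 1)} : Multiset ℤ)) +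
            ∑ j ∈ Finset.range k, ({mu j} : Multiset ℤ) := by
        rw [← Finset.sum_add_distrib, ← Finset.sum_add_distrib]
        exact Finset.sum_congr rfl hmid
      rw [hU0, hLk]
      calc (∑ j ∈ Finset.range k, ({U (j + 1)} : Multiset ℤ)) + {lam 0} +
            ((∑ j ∈ Finset.range k, ({L j} : Multiset ℤ)) + {lam (k + 1)})
          = ((∑ j ∈ Finset.range k, ({U (j + 1)} : Multiset ℤ)) +
              ∑ j ∈ Finset.range k, ({L j} : Multiset ℤ)) + ({lam 0} + {lam (k + 1)}) := by
            abel
        _ = ((∑ j ∈ Finset.range k, ({lam (j + 1)} : Multiset ℤ)) +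
              ∑ j ∈ Finset.range k, ({mu j} : Multiset ℤ)) + ({lam 0} + {lam (k + 1)}) := by
            rw [hsplit]
        _ = _ := by abel
    -- Tt list is sorted
    have hsort : List.Pairwise (· ≥ ·) ((List.range (2 * (k + 1))).map (Tt k lam mu)) := by
      apply sorted_map_range
      intro i hi
      rcases Nat.even_or_odd i with ⟨j, hj⟩ | ⟨j, hj⟩
      · subst hj
        have e1 : Tt k lam mu (j + j) = U j := by
          unfold Tt; rw [if_pos (by omega), show (j + j) / 2 = j by omega]
        have e2 : Tt k lam mu (j + j + 1) = L j := by
          unfold Tt; rw [if_neg (by omega), show (j + j + 1) / 2 = j by omega]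
        rw [e1, e2]
        exact hLU j (by omega)
      · subst hj
        have e1 : Tt k lam mu (2 * j + 1) = L j := by
          unfold Tt; rw [if_neg (by omega), show (2 * j + 1) / 2 = j by omega]
        have e2 : Tt k lam mu (2 * j + 1 + 1) = U (j + 1) := by
          unfold Tt; rw [if_pos (by omega), show (2 * j + 1 + 1) / 2 = j + 1 by omega]
        rw [e1, e2]
        calc U (j + 1) ≤ lam (j + 1) := Ub_le_lam _ _ _
          _ ≤ L j := lam_le_Lb _ _ _ _
    have hsort' : List.Pairwise (· ≥ ·) ((List.range (2 * (k + 1))).map s) :=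
      sorted_map_range _ _ (fun i hi => hs1 i hi)
    have := List.Perm.eq_of_pairwise' hsort hsort' (hperm.trans hs2.symm)
    intro i hi
    have := (List.map_eq_map_iff.1 this.symm) i (List.mem_range.2 hi)
    exact this
  -- now compute the cardinality
  have hcard : Nat.card {κ : Fin (k + 1) → ℤ //
      WeaklyDecr (k + 1) (fget κ) ∧ Interlaces (k + 2) (fget κ) lam ∧
        Interlaces (k + 1) mu (fget κ)} =
      ∏ j : Fin (k + 1), (U j.val - L j.val + 1).toNat := by
    have he : ∀ κ : Fin (k + 1) → ℤ,
        (WeaklyDecr (k + 1) (fget κ) ∧ Interlaces (k + 2) (fget κ) lam ∧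
          Interlaces (k + 1) mu (fget κ)) ↔
        ∀ j : Fin (k + 1), κ j ∈ Finset.Icc (L j.val) (U j.val) := by
      intro κ
      rw [char_iff]
      constructor
      · intro h j
        have := h j.val j.isLt
        rw [Finset.mem_Icc]
        have hf : fget κ j.val = κ j := by
          unfold fget; rw [dif_pos j.isLt]
        rw [hf] at this
        exact this
      · intro h j hj
        have := h ⟨j, hj⟩
        rw [Finset.mem_Icc] at this
        have hf : fget κ j = κ ⟨j, hj⟩ := by unfold fget; rw [dif_pos hj]
        rw [hf]
        exact this
    rw [Nat.card_congr ((Equiv.subtypeEquivRight he).trans (Equiv.subtypePiEquivPi)),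
      Nat.card_pi]
    congr 1
    funext j
    rw [Nat.card_eq_fintype_card, Fintype.card_coe, Int.card_Icc]
    ring_nf
  rw [hcard]
  push_cast
  rw [Fin.prod_univ_eq_prod_range (fun j => ((U j - L j + 1).toNat : ℤ)) (k + 1)]
  apply Finset.prod_congr rfl
  intro j hj
  rw [Finset.mem_range] at hj
  have hUj : s (2 * j) = U j := by
    rw [hst (2 * j) (by omega)]
    unfold Tt; rw [if_pos (by omega), Nat.mul_div_cancel_left _ (by norm_num)]
  have hLj : s (2 * j + 1) = L j := by
    rw [hst (2 * j + 1) (by omega)]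
    unfold Tt; rw [if_neg (by omega), show (2 * j + 1) / 2 = j by omega]
  rw [hUj, hLj, Int.toNat_of_nonneg (by have := hLU j hj; omega)]
end

section
/- Conversely to the forward tiling map: let λ (length n) and μ (length n-2) be weakly decreasing sequences of nonnegative integers with μ doubly interlacing λ, and let (x₁,z₁,...,x_{n-1},z_{n-1}) be the weakly decreasing rearrangement of their concatenation. If (y₁,...,y_{n-1}) is any tuple of integers with x_j ≥ y_j ≥ z_j for all j, then (y₁,...,y_{n-1}) is weakly decreasing and satisfies μ ⊑ (y₁,...,y_{n-1}) ⊑ λ. -/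
lemma antitone_of_weaklyDecr {k : ℕ} {a : ℕ → ℤ} (h : WeaklyDecr k a) :
    ∀ i j, i ≤ j → j < k → a j ≤ a i := by
  intro i j hij hjk
  induction j with
  | zero => interval_cases i; rfl
  | succ j ih =>
    rcases Nat.eq_or_lt_of_le hij with rfl | hlt
    · rfl
    · exact le_trans (h j hjk) (ih (by omega) (by omega))

lemma countP_range_le (m c : ℕ) (p : ℕ → Bool) (h : ∀ i, i < m → p i = true → i < c) :
    (List.range m).countP p ≤ c := by
  have hsub : (List.range m).filter p ⊆ List.range c := by
    intro x hx
    simp only [List.mem_filter, List.mem_range] at hx ⊢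
    exact h x hx.1 hx.2
  have hn : ((List.range m).filter p).Nodup := (List.nodup_range).filter _
  have := (List.subperm_of_subset hn hsub).length_le
  simpa [List.countP_eq_length_filter] using this

lemma le_countP_range (m c : ℕ) (p : ℕ → Bool) (hc : c ≤ m) (h : ∀ i, i < c → p i = true) :
    c ≤ (List.range m).countP p := by
  have hsub : (List.range c).Sublist (List.range m) := List.range_sublist.mpr hc
  have h1 : (List.range c).countP p = c := by
    rw [List.countP_eq_length.mpr]
    · simp
    · intro a ha; exact h a (List.mem_range.mp ha)
  calc c = (List.range c).countP p := h1.symm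
    _ ≤ _ := hsub.countP_le

lemma sorted_upper {m k : ℕ} {s : ℕ → ℤ} (hs : WeaklyDecr m s) (hk : k < m) {t : ℤ}
    (h : (List.range m).countP (fun i => decide (t < s i)) ≤ k) : s k ≤ t := by
  by_contra hlt
  push_neg at hlt
  have : k + 1 ≤ (List.range m).countP (fun i => decide (t < s i)) := by
    apply le_countP_range _ _ _ (by omega)
    intro i hi
    simp only [decide_eq_true_eq]
    exact lt_of_lt_of_le hlt (antitone_of_weaklyDecr hs i k (by omega) hk)
  omega

lemma sorted_lower {m k : ℕ} {s : ℕ → ℤ} (hs : WeaklyDecr m s) (hk : k < m) {t : ℤ}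
    (h : k + 1 ≤ (List.range m).countP (fun i => decide (t ≤ s i))) : t ≤ s k := by
  by_contra hlt
  push_neg at hlt
  have : (List.range m).countP (fun i => decide (t ≤ s i)) ≤ k := by
    apply countP_range_le
    intro i him hi
    simp only [decide_eq_true_eq] at hi
    by_contra hik
    push_neg at hik
    have := antitone_of_weaklyDecr hs k i hik him
    omega
  omega

lemma count_eq (n : ℕ) (lam mu s : ℕ → ℤ) (hs : Rearr n lam mu s) (p : ℤ → Bool) :
    (List.range (2 * n - 2)).countP (fun i => p (s i)) =
      (List.range n).countP (fun i => p (lam i)) +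
        (List.range (n - 2)).countP (fun i => p (mu i)) := by
  have := hs.2.countP_eq p
  simpa [List.countP_map, List.countP_append, Function.comp_def] using this

/-- Inverse direction of the tiling bijection: any tuple `(y₁,…,y_{n-1})` with
`x_j ≥ y_j ≥ z_j` for all `j` is weakly decreasing and satisfies
`μ ⊑ (y₁,…,y_{n-1}) ⊑ λ`. -/
theorem stmt_13 (n : ℕ) (hn : 2 ≤ n) (lam mu s : ℕ → ℤ)
    (hlam : WeaklyDecr n lam) (hlam0 : NonnegSeq n lam)
    (hmu : WeaklyDecr (n - 2) mu) (hmu0 : NonnegSeq (n - 2) mu)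
    (hd : DoublyInterlaces n mu lam)
    (hs : Rearr n lam mu s)
    (y : ℕ → ℤ) (hy : ∀ j : ℕ, j < n - 1 → s (2 * j + 1) ≤ y j ∧ y j ≤ s (2 * j)) :
    WeaklyDecr (n - 1) y ∧ Interlaces n y lam ∧ Interlaces (n - 1) mu y := by
  obtain ⟨kap, hkd, hkl, hmk⟩ := hd
  have hss : WeaklyDecr (2 * n - 2) s := hs.1
  have hla := antitone_of_weaklyDecr hlam
  have hma := antitone_of_weaklyDecr hmu
  -- λ_i ≥ μ_i for i < n-2
  have hlm : ∀ i, i < n - 2 → mu i ≤ lam i := fun i hi =>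
    le_trans (hmk i (by omega)).1 (hkl i (by omega)).1
  -- μ_i ≥ λ_{i+2} for i < n-2
  have hml : ∀ i, i < n - 2 → lam (i + 2) ≤ mu i := fun i hi =>
    le_trans (hkl (i + 1) (by omega)).2 (hmk i (by omega)).2
  -- Bound 1 : s (2j) ≤ λ_j for j < n-1
  have b1 : ∀ j, j < n - 1 → s (2 * j) ≤ lam j := by
    intro j hj
    apply sorted_upper hss (by omega)
    rw [count_eq n lam mu s hs (fun v => decide (lam j < v))]
    have c1 : (List.range n).countP (fun i => decide (lam j < lam i)) ≤ j := by
      apply countP_range_le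
      intro i hi hp
      simp only [decide_eq_true_eq] at hp
      by_contra hij
      push_neg at hij
      have := hla j i hij hi
      omega
    have c2 : (List.range (n - 2)).countP (fun i => decide (lam j < mu i)) ≤ j := by
      apply countP_range_le
      intro i hi hp
      simp only [decide_eq_true_eq] at hp
      have h1 := hlm i hi
      by_contra hij
      push_neg at hij
      have := hla j i hij (by omega)
      omega
    omega
  -- Bound 2 : λ_{j+1} ≤ s (2j+1) for j+1 < n
  have b2 : ∀ j, j + 1 < n → lam (j + 1) ≤ s (2 * j + 1) := by
    intro j hj
    apply sorted_lower hss (by omega)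
    rw [count_eq n lam mu s hs (fun v => decide (lam (j + 1) ≤ v))]
    have c1 : j + 2 ≤ (List.range n).countP (fun i => decide (lam (j + 1) ≤ lam i)) := by
      apply le_countP_range _ _ _ (by omega)
      intro i hi
      simp only [decide_eq_true_eq]
      exact hla i (j + 1) (by omega) (by omega)
    have c2 : j ≤ (List.range (n - 2)).countP (fun i => decide (lam (j + 1) ≤ mu i)) := by
      apply le_countP_range _ _ _ (by omega)
      intro i hi
      simp only [decide_eq_true_eq]
      exact le_trans (hla (i + 2) (j + 1) (by omega) (by omega)) (hml i (by omega))
    omega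
  -- Bound 3 : μ_i ≤ s (2i+1) for i < n-2
  have b3 : ∀ i, i < n - 2 → mu i ≤ s (2 * i + 1) := by
    intro i hi
    apply sorted_lower hss (by omega)
    rw [count_eq n lam mu s hs (fun v => decide (mu i ≤ v))]
    have c1 : i + 1 ≤ (List.range n).countP (fun j => decide (mu i ≤ lam j)) := by
      apply le_countP_range _ _ _ (by omega)
      intro k hk
      simp only [decide_eq_true_eq]
      exact le_trans (hlm i hi) (hla k i (by omega) (by omega))
    have c2 : i + 1 ≤ (List.range (n - 2)).countP (fun j => decide (mu i ≤ mu j)) := by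
      apply le_countP_range _ _ _ (by omega)
      intro k hk
      simp only [decide_eq_true_eq]
      exact hma k i (by omega) hi
    omega
  -- Bound 4 : s (2i+2) ≤ μ_i for i < n-2
  have b4 : ∀ i, i < n - 2 → s (2 * i + 2) ≤ mu i := by
    intro i hi
    apply sorted_upper hss (by omega)
    rw [count_eq n lam mu s hs (fun v => decide (mu i < v))]
    have c1 : (List.range n).countP (fun j => decide (mu i < lam j)) ≤ i + 2 := by
      apply countP_range_le
      intro k hk hp
      simp only [decide_eq_true_eq] at hp
      have h1 := hml i hi
      by_contra hik
      push_neg at hik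
      have := hla (i + 2) k hik hk
      omega
    have c2 : (List.range (n - 2)).countP (fun j => decide (mu i < mu j)) ≤ i := by
      apply countP_range_le
      intro k hk hp
      simp only [decide_eq_true_eq] at hp
      by_contra hik
      push_neg at hik
      have := hma i k hik hk
      omega
    omega
  refine ⟨?_, ?_, ?_⟩
  · -- WeaklyDecr (n-1) y
    intro i hi
    have h1 := (hy (i + 1) hi).2
    have h2 := (hy i (by omega)).1
    have h3 : s (2 * (i + 1)) ≤ s (2 * i + 1) := hss (2 * i + 1) (by omega)
    omega
  · -- Interlaces n y lam
    intro i hi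
    have h1 := (hy i (by omega)).2
    have h2 := (hy i (by omega)).1
    exact ⟨le_trans h1 (b1 i (by omega)), le_trans (b2 i hi) h2⟩
  · -- Interlaces (n-1) mu y
    intro i hi
    have h1 := (hy i (by omega)).1
    have h2 := (hy (i + 1) (by omega)).2
    refine ⟨le_trans (b3 i (by omega)) h1, le_trans h2 ?_⟩
    have h3 := b4 i (by omega)
    have he : 2 * (i + 1) = 2 * i + 2 := by ring
    rw [he]
    exact h3
end
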